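/- Lattice summation bound: for every dimension d ≥ 1 there exists a constant C_d > 0 such that for every real a ≥ 4d + 4, Σ_{ν∈ℤ^d} Σ_{k∈ℕ, k > log^{1/d}(e+|ν|)} e^{−a (2k+1)^d / 2} ≤ C_d e^{−a}, where |ν| = Σ_{ℓ=1}^d |ν_ℓ| is the ℓ¹ norm on ℤ^d. -/

import Mathlib

open Real

/-- ℓ¹ norm on the lattice `ℤ^d`. -/
def lnorm {d : ℕ} (ν : Fin d → ℤ) : ℤ := ∑ ℓ, |ν ℓ|

lemma aux_g_summable {p : ℝ} (hp : 1 < p) :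
    Summable (fun n : ℤ => ((1:ℝ) + |n|) ^ (-p)) := by
  have hnat : Summable (fun n : ℕ => ((1:ℝ) + n) ^ (-p)) := by
    have : Summable (fun n : ℕ => ((n:ℝ) + 1) ^ (-p)) := by
      have := (summable_nat_add_iff (f := fun n : ℕ => (n:ℝ) ^ (-p)) 1).2
        (Real.summable_nat_rpow.2 (by linarith))
      simpa using this
    simpa [add_comm] using this
  apply Summable.of_nat_of_neg_add_one
  · simpa using hnat
  · have : Summable (fun n : ℕ => ((1:ℝ) + (n+1)) ^ (-p)) := by
      have := (summable_nat_add_iff (f := fun n : ℕ => ((1:ℝ) + n) ^ (-p)) 1).2 hnat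
      simpa using this
    convert this using 2 with n
    push_cast
    rw [abs_neg, abs_of_nonneg (by positivity)]

lemma aux_prod_summable (g : ℤ → ℝ) (hg : Summable g) (hg0 : ∀ n, 0 ≤ g n) (d : ℕ) :
    Summable (fun ν : Fin d → ℤ => ∏ ℓ, g (ν ℓ)) := by
  induction d with
  | zero => exact .of_finite
  | succ d ih =>
    have h := hg.mul_of_nonneg ih hg0 (fun ν => Finset.prod_nonneg fun ℓ _ => hg0 _)
    have := ((Fin.consEquiv (fun _ : Fin (d+1) => ℤ)).symm.summable_iff
      (f := fun x : ℤ × (Fin d → ℤ) => g x.1 * ∏ ℓ, g (x.2 ℓ))).2 h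
    convert this using 2 with ν
    simp [Fin.consEquiv, Fin.prod_univ_succ, Fin.tail]

lemma aux_keybound (d : ℕ) (hd : 0 < d) (a : ℝ) (ha : 4 * (d:ℝ) + 4 ≤ a)
    (ν : Fin d → ℤ) (k : ℕ)
    (hk : Real.log (Real.exp 1 + (lnorm ν : ℝ)) ^ ((1:ℝ)/(d:ℝ)) < (k : ℝ)) :
    Real.exp (-(a * (2 * (k:ℝ) + 1) ^ d) / 2) ≤
      Real.exp 2 * Real.exp (-a) * Real.exp (-(k:ℝ)) *
        ∏ ℓ, ((1:ℝ) + |ν ℓ|) ^ (-(((d:ℝ)+1)/d)) := by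
  simp only [Int.cast_abs]
  have hdR : (0:ℝ) < d := by exact_mod_cast hd
  have hc0 : (0:ℝ) ≤ (lnorm ν : ℝ) := by
    have : (0:ℤ) ≤ lnorm ν := Finset.sum_nonneg fun _ _ => abs_nonneg _
    exact_mod_cast this
  set c : ℝ := (lnorm ν : ℝ) with hc
  have hX1 : (1:ℝ) < Real.exp 1 + c := by
    have := Real.add_one_lt_exp (x := 1) one_ne_zero
    linarith
  set L0 : ℝ := Real.log (Real.exp 1 + c) with hL0
  have hL1 : 1 ≤ L0 := by
    rw [hL0, Real.le_log_iff_exp_le (by linarith)]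
    linarith
  have hL0nn : 0 ≤ L0 := by linarith
  have hone : (1:ℝ) ≤ L0 ^ ((1:ℝ)/(d:ℝ)) := by
    calc (1:ℝ) = 1 ^ ((1:ℝ)/(d:ℝ)) := (Real.one_rpow _).symm
    _ ≤ L0 ^ ((1:ℝ)/(d:ℝ)) := Real.rpow_le_rpow zero_le_one hL1 (by positivity)
  have hk1R : (1:ℝ) < (k:ℝ) := lt_of_le_of_lt hone hk
  have hk2 : 2 ≤ k := by
    have : 1 < k := by exact_mod_cast hk1R
    omega
  have hk2R : (2:ℝ) ≤ (k:ℝ) := by exact_mod_cast hk2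
  have hLkd : L0 ≤ (k:ℝ) ^ d := by
    have h1 : (L0 ^ ((1:ℝ)/(d:ℝ))) ^ d ≤ (k:ℝ) ^ d :=
      pow_le_pow_left₀ (by positivity) hk.le d
    rwa [← Real.rpow_natCast (L0 ^ ((1:ℝ)/(d:ℝ))) d, ← Real.rpow_mul hL0nn,
      one_div, inv_mul_cancel₀ (ne_of_gt hdR), Real.rpow_one] at h1
  set K : ℝ := (2 * (k:ℝ) + 1) ^ d with hK
  have hkK : (k:ℝ) ^ d ≤ K := pow_le_pow_left₀ (by positivity) (by linarith) d
  have hlinK : 2 * (k:ℝ) + 1 ≤ K := le_self_pow₀ (by linarith) (Nat.pos_iff_ne_zero.1 hd)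
  have ha8 : (8:ℝ) ≤ a := by
    have h1d : (1:ℝ) ≤ d := by exact_mod_cast hd
    linarith
  have hmain : ((d:ℝ)+1) * L0 + (a + (k:ℝ) - 2) ≤ a * K / 2 := by
    have h2 : ((d:ℝ)+1) * L0 ≤ (a/4) * L0 :=
      mul_le_mul_of_nonneg_right (by linarith) hL0nn
    have h3 : (a/4) * L0 ≤ (a/4) * K :=
      mul_le_mul_of_nonneg_left (le_trans hLkd hkK) (by linarith)
    have h4 : a + (k:ℝ) - 2 ≤ (a/4) * (2 * (k:ℝ) + 1) := by nlinarith
    have h5 : (a/4) * (2 * (k:ℝ) + 1) ≤ (a/4) * K :=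
      mul_le_mul_of_nonneg_left hlinK (by linarith)
    linarith
  have hexp : Real.exp (-(a * K) / 2) ≤
      Real.exp (-(((d:ℝ)+1) * L0) + (2 - a - (k:ℝ))) := by
    apply Real.exp_le_exp.2; linarith
  have hrpow : Real.exp (-(((d:ℝ)+1) * L0)) = (Real.exp 1 + c) ^ (-((d:ℝ)+1)) := by
    rw [Real.rpow_def_of_pos (by linarith), ← hL0]; ring_nf
  have hprod : (Real.exp 1 + c) ^ (-((d:ℝ)+1)) ≤
      ∏ ℓ, ((1:ℝ) + |(ν ℓ : ℝ)|) ^ (-(((d:ℝ)+1)/d)) := by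
    set X : ℝ := Real.exp 1 + c
    set q : ℝ := ((d:ℝ)+1)/d with hq
    have hq0 : 0 ≤ q := by positivity
    have hfac : ∀ ℓ : Fin d, (1:ℝ) + |(ν ℓ : ℝ)| ≤ X := by
      intro ℓ
      have h1 : |ν ℓ| ≤ lnorm ν := Finset.single_le_sum
        (f := fun ℓ => |ν ℓ|) (fun _ _ => abs_nonneg _) (Finset.mem_univ ℓ)
      have h1R : |(ν ℓ : ℝ)| ≤ c := by rw [hc]; exact_mod_cast h1
      have : (1:ℝ) < Real.exp 1 := by
        have := Real.add_one_lt_exp (x := 1) one_ne_zero; linarith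
      simp only [X]; linarith
    have hP : ∏ ℓ : Fin d, ((1:ℝ) + |(ν ℓ : ℝ)|) ≤ X ^ d := by
      calc ∏ ℓ : Fin d, ((1:ℝ) + |(ν ℓ : ℝ)|) ≤ ∏ _ℓ : Fin d, X :=
        Finset.prod_le_prod (fun _ _ => by positivity) (fun ℓ _ => hfac ℓ)
      _ = X ^ d := by simp
    have hPq : (∏ ℓ : Fin d, ((1:ℝ) + |(ν ℓ : ℝ)|)) ^ q ≤ X ^ (((d:ℝ)+1)) := by
      calc (∏ ℓ : Fin d, ((1:ℝ) + |(ν ℓ : ℝ)|)) ^ q ≤ (X ^ (d:ℕ)) ^ q :=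
        Real.rpow_le_rpow (Finset.prod_nonneg fun _ _ => by positivity) hP hq0
      _ = X ^ (((d:ℝ)+1)) := by
        rw [← Real.rpow_natCast X d, ← Real.rpow_mul (by positivity)]
        congr 1
        rw [hq]; field_simp
    have hXpos : (0:ℝ) < X := by positivity
    have hPpos : (0:ℝ) < ∏ ℓ : Fin d, ((1:ℝ) + |(ν ℓ : ℝ)|) :=
      Finset.prod_pos fun _ _ => by positivity
    rw [Real.rpow_neg hXpos.le]
    have hpr : ∏ ℓ, ((1:ℝ) + |(ν ℓ : ℝ)|) ^ (-q) =
        ((∏ ℓ : Fin d, ((1:ℝ) + |(ν ℓ : ℝ)|)) ^ q)⁻¹ := by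
      rw [← Real.rpow_neg hPpos.le]
      exact (Real.finset_prod_rpow _ _ (fun _ _ => by positivity) _)
    rw [show (-(((d:ℝ)+1)/d)) = -q from rfl, hpr]
    exact inv_anti₀ (by positivity) hPq
  calc Real.exp (-(a * (2 * (k:ℝ) + 1) ^ d) / 2)
      ≤ Real.exp (-(((d:ℝ)+1) * L0) + (2 - a - (k:ℝ))) := hexp
    _ = (Real.exp 1 + c) ^ (-((d:ℝ)+1)) * (Real.exp 2 * Real.exp (-a) * Real.exp (-(k:ℝ))) := by
        rw [← hrpow, ← Real.exp_add, ← Real.exp_add, ← Real.exp_add]; ring_nf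
    _ ≤ (∏ ℓ, ((1:ℝ) + |(ν ℓ : ℝ)|) ^ (-(((d:ℝ)+1)/d))) *
          (Real.exp 2 * Real.exp (-a) * Real.exp (-(k:ℝ))) := by
        apply mul_le_mul_of_nonneg_right hprod (by positivity)
    _ = _ := by ring

/-- Lattice summation bound:
`Σ_ν Σ_{k > log^{1/d}(e+|ν|)} e^{-a(2k+1)^d/2} ≤ C_d e^{-a}` for all `a ≥ 4d+4`. -/
theorem statement10 (d : ℕ) (hd : 0 < d) :
    ∃ C > (0:ℝ), ∀ a : ℝ, 4 * (d : ℝ) + 4 ≤ a →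
      (∑' ν : Fin d → ℤ, ∑' k : ℕ,
          if Real.log (Real.exp 1 + (lnorm ν : ℝ)) ^ ((1:ℝ)/(d:ℝ)) < (k : ℝ)
          then Real.exp (-(a * (2 * (k:ℝ) + 1) ^ d) / 2) else 0)
        ≤ C * Real.exp (-a) := by
  set p : ℝ := ((d:ℝ)+1)/d with hp
  have hdR : (0:ℝ) < d := by exact_mod_cast hd
  have hp1 : 1 < p := by
    rw [hp, lt_div_iff₀ hdR]
    linarith
  set g : ℤ → ℝ := fun n => ((1:ℝ) + |n|) ^ (-p) with hgdef
  have hg : Summable g := aux_g_summable hp1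
  have hg0 : ∀ n, 0 ≤ g n := fun n => Real.rpow_nonneg (by positivity) _
  set F : (Fin d → ℤ) → ℝ := fun ν => ∏ ℓ, g (ν ℓ) with hFdef
  have hF : Summable F := aux_prod_summable g hg hg0 d
  have hF0 : ∀ ν, 0 ≤ F ν := fun ν => Finset.prod_nonneg fun _ _ => hg0 _
  have hFpos : ∀ ν, 0 < F ν := fun ν =>
    Finset.prod_pos fun ℓ _ => Real.rpow_pos_of_pos (by positivity) _
  set T : ℝ := ∑' ν, F ν with hT
  have hTpos : 0 < T := Summable.tsum_pos hF hF0 (fun _ => 0) (hFpos _)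
  have hEk : ∀ k : ℕ, Real.exp (-(k:ℝ)) = (Real.exp (-1)) ^ k := by
    intro k
    rw [← Real.exp_nat_mul]
    ring_nf
  have hE : Summable (fun k : ℕ => Real.exp (-(k:ℝ))) := by
    have := summable_geometric_of_lt_one (Real.exp_pos (-1)).le
      (Real.exp_lt_one_iff.2 (by norm_num))
    exact this.congr fun k => (hEk k).symm
  set E : ℝ := ∑' k : ℕ, Real.exp (-(k:ℝ)) with hEdef
  have hEpos : 0 < E := Summable.tsum_pos hE (fun k => (Real.exp_pos _).le) 0 (Real.exp_pos _)
  refine ⟨Real.exp 2 * T * E, by positivity, ?_⟩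
  intro a ha
  set term : (Fin d → ℤ) → ℕ → ℝ := fun ν k =>
    if Real.log (Real.exp 1 + (lnorm ν : ℝ)) ^ ((1:ℝ)/(d:ℝ)) < (k : ℝ)
    then Real.exp (-(a * (2 * (k:ℝ) + 1) ^ d) / 2) else 0 with hterm
  have htermle : ∀ ν k, term ν k ≤ Real.exp 2 * Real.exp (-a) * Real.exp (-(k:ℝ)) * F ν := by
    intro ν k
    simp only [hterm]
    split
    · exact aux_keybound d hd a ha ν k (by assumption)
    · have := hF0 ν
      positivity
  have hterm0 : ∀ ν k, 0 ≤ term ν k := by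
    intro ν k
    simp only [hterm]
    split
    · positivity
    · exact le_refl 0
  have hGsum : ∀ ν, Summable (fun k : ℕ =>
      Real.exp 2 * Real.exp (-a) * Real.exp (-(k:ℝ)) * F ν) := by
    intro ν
    exact ((hE.mul_left (Real.exp 2 * Real.exp (-a))).mul_right (F ν)).congr
      (fun k => by ring)
  have h1 : ∀ ν, Summable (fun k => term ν k) := fun ν =>
    Summable.of_nonneg_of_le (hterm0 ν) (htermle ν) (hGsum ν)
  have hinner : ∀ ν, (∑' k, term ν k) ≤ (Real.exp 2 * Real.exp (-a) * E) * F ν := by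
    intro ν
    calc (∑' k, term ν k)
        ≤ ∑' k : ℕ, Real.exp 2 * Real.exp (-a) * Real.exp (-(k:ℝ)) * F ν :=
          Summable.tsum_le_tsum (htermle ν) (h1 ν) (hGsum ν)
      _ = (Real.exp 2 * Real.exp (-a) * E) * F ν := by
          rw [show (fun k:ℕ => Real.exp 2 * Real.exp (-a) * Real.exp (-(k:ℝ)) * F ν)
              = fun k:ℕ => (Real.exp 2 * Real.exp (-a) * F ν) * Real.exp (-(k:ℝ))
            from funext fun k => by ring]
          rw [tsum_mul_left, ← hEdef]
          ring
  have h2 : Summable (fun ν => ∑' k, term ν k) :=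
    Summable.of_nonneg_of_le (fun ν => tsum_nonneg (hterm0 ν)) hinner (hF.mul_left _)
  calc (∑' ν, ∑' k, term ν k)
      ≤ ∑' ν, (Real.exp 2 * Real.exp (-a) * E) * F ν :=
        Summable.tsum_le_tsum hinner h2 (hF.mul_left _)
    _ = (Real.exp 2 * Real.exp (-a) * E) * T := by rw [tsum_mul_left, ← hT]
    _ = Real.exp 2 * T * E * Real.exp (-a) := by ring
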